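/- For an incidence independent decomposition N = N_1 ∪ ... ∪ N_k of a chemical reaction network, the deficiencies satisfy δ ≥ δ_1 + ... + δ_k. -/

import Mathlib

open scoped Classical

noncomputable section

/-- A reaction: an ordered pair (reactant complex, product complex) of vectors in ℝ^S. -/
abbrev Rxn (S : Type*) := (S → ℝ) × (S → ℝ)

variable {S : Type*} [Fintype S]

/-- The set of complexes occurring in a reaction set. -/
def complexesOf (R : Finset (Rxn S)) : Finset (S → ℝ) :=
  R.image Prod.fst ∪ R.image Prod.snd

/-- `(C, R)` is a chemical reaction network on the species set `S`:
complexes have nonnegative integer coordinates, reactions go between complexes,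
no reaction is a loop, and every complex occurs in at least one reaction. -/
def IsCRN (C : Finset (S → ℝ)) (R : Finset (Rxn S)) : Prop :=
  C.Nonempty ∧ R.Nonempty ∧
  (∀ y ∈ C, ∀ s, ∃ n : ℕ, y s = (n : ℝ)) ∧
  (∀ r ∈ R, r.1 ∈ C ∧ r.2 ∈ C) ∧
  (∀ r ∈ R, r.1 ≠ r.2) ∧
  (∀ y ∈ C, ∃ r ∈ R, r.1 = y ∨ r.2 = y)

/-- The stoichiometric subspace `span {y' - y : (y, y') ∈ R}`. -/
def stoichSubspace (R : Finset (Rxn S)) : Submodule ℝ (S → ℝ) :=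
  Submodule.span ℝ ((fun r : Rxn S => r.2 - r.1) '' ↑R)

/-- The rank `s = dim S` of the network. -/
def crnRank (R : Finset (Rxn S)) : ℕ := Module.finrank ℝ (stoichSubspace R)

/-- The standard basis vector `ω_y` of the complex space `ℝ^C` (realized inside
the space of real-valued functions on complexes). -/
def omegaC (y : S → ℝ) : (S → ℝ) → ℝ := fun z => if z = y then 1 else 0

/-- The image of the incidence map `I_a`, i.e. the span of the vectors
`ω_{y'} - ω_y` over reactions `y → y'`. -/
def incImage (R : Finset (Rxn S)) : Submodule ℝ ((S → ℝ) → ℝ) :=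
  Submodule.span ℝ ((fun r : Rxn S => omegaC r.2 - omegaC r.1) '' ↑R)

/-- The underlying undirected graph of `(C, R)`, on the complexes occurring in `R`. -/
def linkGraph (R : Finset (Rxn S)) : SimpleGraph {y : S → ℝ // y ∈ complexesOf R} where
  Adj a b := a ≠ b ∧ ((a.1, b.1) ∈ R ∨ (b.1, a.1) ∈ R)
  symm := ⟨fun a b h => ⟨h.1.symm, h.2.symm⟩⟩
  loopless := ⟨fun a h => h.1 rfl⟩

/-- `n`, the number of complexes. -/
def numComplexes (R : Finset (Rxn S)) : ℕ := (complexesOf R).card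

/-- `l`, the number of linkage classes (connected components of the
underlying undirected graph). -/
def numLinkageClasses (R : Finset (Rxn S)) : ℕ :=
  Nat.card (linkGraph R).ConnectedComponent

/-- The deficiency `δ = n - l - s` (as an integer). -/
def deficiency (R : Finset (Rxn S)) : ℤ :=
  (numComplexes R : ℤ) - (numLinkageClasses R : ℤ) - (crnRank R : ℤ)

/-- A covering of the reaction set `R`: a family of subsets of `R` whose union is `R`. -/
def IsCovering {ι : Type*} (R : Finset (Rxn S)) (f : ι → Finset (Rxn S)) : Prop :=
  (∀ i, f i ⊆ R) ∧ ∀ r ∈ R, ∃ i, r ∈ f i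

/-- A decomposition of the reaction set `R`: a partition of `R` into nonempty subsets. -/
def IsDecomposition {ι : Type*} (R : Finset (Rxn S)) (f : ι → Finset (Rxn S)) : Prop :=
  (∀ i, (f i).Nonempty) ∧ (Pairwise fun i j => Disjoint (f i) (f j)) ∧
  (∀ i, f i ⊆ R) ∧ (∀ r ∈ R, ∃ i, r ∈ f i)

/-- Independence: the stoichiometric subspace is the direct sum of those of the subnetworks. -/
def IsIndependent {ι : Type*} (R : Finset (Rxn S)) (f : ι → Finset (Rxn S)) : Prop :=
  (⨆ i, stoichSubspace (f i)) = stoichSubspace R ∧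
  iSupIndep fun i => stoichSubspace (f i)

/-- Incidence independence: the image of the incidence map is the direct sum of the
images of the incidence maps of the subnetworks. -/
def IsIncidenceIndependent {ι : Type*} (R : Finset (Rxn S)) (f : ι → Finset (Rxn S)) : Prop :=
  (⨆ i, incImage (f i)) = incImage R ∧
  iSupIndep fun i => incImage (f i)

/-- A `𝒞`-decomposition: the complex sets of the subnetworks are pairwise disjoint. -/
def CDisjoint {ι : Type*} (f : ι → Finset (Rxn S)) : Prop :=
  Pairwise fun i j => Disjoint (complexesOf (f i)) (complexesOf (f j))

/-- The set of nonzero complexes of a reaction set. -/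
def nonzeroComplexesOf (R : Finset (Rxn S)) : Finset (S → ℝ) := (complexesOf R).erase 0

/-- A `𝒞*`-decomposition: the sets of nonzero complexes are pairwise disjoint. -/
def CstarDisjoint {ι : Type*} (f : ι → Finset (Rxn S)) : Prop :=
  Pairwise fun i j => Disjoint (nonzeroComplexesOf (f i)) (nonzeroComplexesOf (f j))

/-- A coarsening: each block of `f` is contained in exactly one block of `g`. -/
def IsCoarsening {ι κ : Type*} (f : ι → Finset (Rxn S)) (g : κ → Finset (Rxn S)) : Prop :=
  ∀ i, ∃! j, f i ⊆ g j

/-- Undirected reachability in the graph `(C, R)`. -/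
def undirReach (R : Finset (Rxn S)) : (S → ℝ) → (S → ℝ) → Prop :=
  Relation.ReflTransGen fun y z => (y, z) ∈ R ∨ (z, y) ∈ R

/-- Directed reachability in the digraph `(C, R)`. -/
def dirReach (R : Finset (Rxn S)) : (S → ℝ) → (S → ℝ) → Prop :=
  Relation.ReflTransGen fun y z => (y, z) ∈ R

/-- Weak reversibility: every connected component of the directed graph `(C, R)`
is strongly connected. -/
def WeaklyReversible (R : Finset (Rxn S)) : Prop :=
  ∀ y z, undirReach R y z → dirReach R y z

/-- The set of complex balanced equilibria `Z₊(N, K)` of a kinetics `K` on the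
(sub)network with reaction set `R`: positive vectors `x` with `I_a K(x) = 0`. -/
def Zplus (R : Finset (Rxn S)) (K : (S → ℝ) → Rxn S → ℝ) : Set (S → ℝ) :=
  {x | (∀ s, 0 < x s) ∧ ∑ r ∈ R, K x r • (omegaC r.2 - omegaC r.1) = 0}

/-- The reactions lying in the linkage class of the zero complex. -/
def zeroLinkReactions (R : Finset (Rxn S)) : Finset (Rxn S) :=
  R.filter fun r => undirReach R 0 r.1

/-- The reaction set of the linkage class `c`: all reactions whose complexes lie in `c`. -/
def lcReactions (R : Finset (Rxn S)) (c : (linkGraph R).ConnectedComponent) :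
    Finset (Rxn S) :=
  R.filter fun r => ∃ h : r.1 ∈ complexesOf R, (linkGraph R).connectedComponentMk ⟨r.1, h⟩ = c

/-- The network has independent linkage classes (ILC): the linkage class
decomposition is independent. -/
def HasILC (R : Finset (Rxn S)) : Prop := IsIndependent R (lcReactions R)


section AuxProof

open Module Submodule

instance incImage_fd (R : Finset (Rxn S)) : FiniteDimensional ℝ (incImage R) :=
  FiniteDimensional.span_of_finite ℝ (R.finite_toSet.image _)

instance stoich_fd (R : Finset (Rxn S)) : FiniteDimensional ℝ (stoichSubspace R) :=
  FiniteDimensional.span_of_finite ℝ (R.finite_toSet.image _)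

lemma fst_mem_complexesOf {R : Finset (Rxn S)} {r : Rxn S} (hr : r ∈ R) :
    r.1 ∈ complexesOf R :=
  Finset.mem_union.mpr (Or.inl (Finset.mem_image.mpr ⟨r, hr, rfl⟩))

lemma snd_mem_complexesOf {R : Finset (Rxn S)} {r : Rxn S} (hr : r ∈ R) :
    r.2 ∈ complexesOf R :=
  Finset.mem_union.mpr (Or.inr (Finset.mem_image.mpr ⟨r, hr, rfl⟩))

lemma omega_sub_mem_of_reachable {R : Finset (Rxn S)}
    {u w : {y : S → ℝ // y ∈ complexesOf R}} (h : (linkGraph R).Reachable u w) :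
    omegaC w.1 - omegaC u.1 ∈ incImage R := by
  obtain ⟨p⟩ := h
  induction p with
  | nil => simp
  | @cons a b c hadj p ih =>
    have hab : omegaC b.1 - omegaC a.1 ∈ incImage R := by
      rcases (show a ≠ b ∧ ((a.1, b.1) ∈ R ∨ (b.1, a.1) ∈ R) from hadj).2 with hr | hr
      · exact Submodule.subset_span ⟨(a.1, b.1), hr, rfl⟩
      · have : omegaC a.1 - omegaC b.1 ∈ incImage R :=
          Submodule.subset_span ⟨(b.1, a.1), hr, rfl⟩
        simpa using (incImage R).neg_mem this
    have := (incImage R).add_mem ih hab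
    convert this using 1
    abel

lemma incImage_apply_eq_zero {R : Finset (Rxn S)} {x : (S → ℝ) → ℝ}
    (hx : x ∈ incImage R) {z : S → ℝ} (hz : z ∉ complexesOf R) : x z = 0 := by
  induction hx using Submodule.span_induction with
  | mem g hg =>
    obtain ⟨r, hr, rfl⟩ := hg
    have h1 : z ≠ r.1 := fun h => hz (h ▸ fst_mem_complexesOf hr)
    have h2 : z ≠ r.2 := fun h => hz (h ▸ snd_mem_complexesOf hr)
    simp [omegaC, h1, h2]
  | zero => simp
  | add a b _ _ ha hb => simp [Pi.add_apply, ha, hb]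
  | smul c a _ ha => simp [Pi.smul_apply, ha]

/-- The map summing a function on vertices over each connected component. -/
noncomputable def psiMap (R : Finset (Rxn S)) :
    ({y : S → ℝ // y ∈ complexesOf R} → ℝ) →ₗ[ℝ]
      ((linkGraph R).ConnectedComponent → ℝ) where
  toFun h c := ∑ v : {y : S → ℝ // y ∈ complexesOf R},
    if (linkGraph R).connectedComponentMk v = c then h v else 0
  map_add' x y := by
    funext c
    rw [Pi.add_apply, ← Finset.sum_add_distrib]
    exact Finset.sum_congr rfl fun v _ => by split <;> simp
  map_smul' a x := by
    funext c
    simp only [RingHom.id_apply, Pi.smul_apply, smul_eq_mul, Finset.mul_sum]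
    exact Finset.sum_congr rfl fun v _ => by split <;> simp

lemma psi_single (R : Finset (Rxn S)) (w : {y : S → ℝ // y ∈ complexesOf R})
    (c : (linkGraph R).ConnectedComponent) :
    (∑ v : {y : S → ℝ // y ∈ complexesOf R},
        if (linkGraph R).connectedComponentMk v = c then omegaC w.1 v.1 else 0)
      = if (linkGraph R).connectedComponentMk w = c then 1 else 0 := by
  have : ∀ v : {y : S → ℝ // y ∈ complexesOf R},
      (if (linkGraph R).connectedComponentMk v = c then omegaC w.1 v.1 else 0)
        = if v = w then (if (linkGraph R).connectedComponentMk w = c then (1:ℝ) else 0)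
          else 0 := by
    intro v
    by_cases hvw : v = w
    · subst hvw; simp [omegaC]
    · have hne : v.1 ≠ w.1 := fun h => hvw (Subtype.ext h)
      simp [omegaC, hne, hvw]
  rw [Finset.sum_congr rfl fun v _ => this v, Fintype.sum_ite_eq' w]

lemma finrank_incImage_add_le (R : Finset (Rxn S)) :
    Module.finrank ℝ (incImage R) + Nat.card (linkGraph R).ConnectedComponent
      ≤ Fintype.card {y : S → ℝ // y ∈ complexesOf R} := by
  set V := {y : S → ℝ // y ∈ complexesOf R}
  set Γ := (linkGraph R).ConnectedComponent
  set ρ : ((S → ℝ) → ℝ) →ₗ[ℝ] (V → ℝ) :=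
    LinearMap.funLeft ℝ ℝ (fun v : V => (v : S → ℝ)) with hρ
  set F : incImage R →ₗ[ℝ] (V → ℝ) := ρ.comp (incImage R).subtype with hF
  have hFinj : Function.Injective F := by
    rw [← LinearMap.ker_eq_bot]
    rw [Submodule.eq_bot_iff]
    intro x hx
    have hx' : ∀ v : V, x.1 v.1 = 0 := fun v => congrFun hx v
    apply Subtype.ext
    funext z
    by_cases hz : z ∈ complexesOf R
    · exact hx' ⟨z, hz⟩
    · exact incImage_apply_eq_zero x.2 hz
  have hker : ∀ y ∈ incImage R, psiMap R (ρ y) = 0 := by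
    intro y hy
    induction hy using Submodule.span_induction with
    | mem g hg =>
      obtain ⟨r, hr, rfl⟩ := hg
      funext c
      have v1 : V := ⟨r.1, fst_mem_complexesOf hr⟩
      set w1 : V := ⟨r.1, fst_mem_complexesOf hr⟩
      set w2 : V := ⟨r.2, snd_mem_complexesOf hr⟩
      have hcomp : (linkGraph R).connectedComponentMk w1
          = (linkGraph R).connectedComponentMk w2 := by
        by_cases h12 : r.1 = r.2
        · congr 1; exact Subtype.ext h12
        · refine SimpleGraph.ConnectedComponent.sound ?_
          exact SimpleGraph.Adj.reachable (show w1 ≠ w2 ∧ ((w1.1, w2.1) ∈ R ∨ (w2.1, w1.1) ∈ R) from ⟨fun h => h12 (congrArg Subtype.val h), Or.inl hr⟩)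
      have : (psiMap R) (ρ (omegaC r.2 - omegaC r.1)) c
          = (∑ v : V, if (linkGraph R).connectedComponentMk v = c
                then omegaC r.2 v.1 else 0)
            - ∑ v : V, if (linkGraph R).connectedComponentMk v = c
                then omegaC r.1 v.1 else 0 := by
        rw [← Finset.sum_sub_distrib]
        refine Finset.sum_congr rfl fun v _ => ?_
        simp only [psiMap, LinearMap.coe_mk, AddHom.coe_mk, hρ, LinearMap.funLeft_apply,
          Pi.sub_apply]
        split <;> simp
      rw [this, psi_single R w2 c, psi_single R w1 c, hcomp]
      simp
    | zero => simp
    | add a b ha hb iha ihb => rw [map_add, map_add, iha, ihb, add_zero]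
    | smul t a ha iha => rw [map_smul, map_smul, iha, smul_zero]
  have hrange : LinearMap.range F ≤ LinearMap.ker (psiMap R) := by
    rintro _ ⟨x, rfl⟩
    exact hker x.1 x.2
  have hsurj : Function.Surjective (psiMap R) := by
    intro g
    refine ⟨fun v => if v = ((linkGraph R).connectedComponentMk v).out
        then g ((linkGraph R).connectedComponentMk v) else 0, ?_⟩
    funext c
    have : ∀ v : V,
        (if (linkGraph R).connectedComponentMk v = c
          then (if v = ((linkGraph R).connectedComponentMk v).out
            then g ((linkGraph R).connectedComponentMk v) else 0) else 0)
        = if v = c.out then g c else 0 := by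
      intro v
      by_cases hv : v = c.out
      · subst hv
        have hmk : (linkGraph R).connectedComponentMk c.out = c := c.out_eq
        simp [hmk]
      · by_cases hmk : (linkGraph R).connectedComponentMk v = c
        · have : v ≠ ((linkGraph R).connectedComponentMk v).out := by rw [hmk]; exact hv
          simp [hmk, this, hv]
        · simp [hmk, hv]
    show (∑ v : V, if (linkGraph R).connectedComponentMk v = c
        then _ else 0) = g c
    rw [Finset.sum_congr rfl fun v _ => this v, Fintype.sum_ite_eq' c.out]
  have hrk : Module.finrank ℝ (LinearMap.range (psiMap R))
      + Module.finrank ℝ (LinearMap.ker (psiMap R)) = Fintype.card V := by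
    rw [LinearMap.finrank_range_add_finrank_ker, Module.finrank_fintype_fun_eq_card]
  have hrgψ : Module.finrank ℝ (LinearMap.range (psiMap R)) = Nat.card Γ := by
    rw [LinearMap.range_eq_top.mpr hsurj, finrank_top, Module.finrank_fintype_fun_eq_card,
      Nat.card_eq_fintype_card]
  have h1 : Module.finrank ℝ (incImage R) = Module.finrank ℝ (LinearMap.range F) :=
    (LinearMap.finrank_range_of_inj hFinj).symm
  have h2 : Module.finrank ℝ (LinearMap.range F)
      ≤ Module.finrank ℝ (LinearMap.ker (psiMap R)) :=
    Submodule.finrank_mono hrange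
  have hVcard : Fintype.card V = Fintype.card {y : S → ℝ // y ∈ complexesOf R} :=
    Fintype.card_congr (Equiv.refl _)
  omega

lemma le_finrank_incImage (R : Finset (Rxn S)) :
    Fintype.card {y : S → ℝ // y ∈ complexesOf R}
      ≤ Module.finrank ℝ (incImage R) + Nat.card (linkGraph R).ConnectedComponent := by
  set V := {y : S → ℝ // y ∈ complexesOf R}
  set Γ := (linkGraph R).ConnectedComponent
  let mk : V → Γ := (linkGraph R).connectedComponentMk
  let P : V → Prop := fun v => v = (mk v).out
  have hmkout : ∀ c : Γ, mk c.out = c := fun c => c.out_eq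
  -- the roots are in bijection with the components
  have hcardP : Fintype.card {v : V // P v} = Fintype.card Γ := by
    refine Fintype.card_congr ⟨fun v => mk v.1, fun c => ⟨c.out, ?_⟩, ?_, ?_⟩
    · show c.out = (mk c.out).out
      rw [hmkout]
    · intro v
      apply Subtype.ext
      exact v.2.symm
    · intro c
      exact hmkout c
  -- the linearly independent family
  have hmem : ∀ v : V, omegaC v.1 - omegaC ((mk v).out).1 ∈ incImage R := by
    intro v
    refine omega_sub_mem_of_reachable (u := (mk v).out) (w := v) ?_
    refine SimpleGraph.ConnectedComponent.exact ?_
    show mk (mk v).out = mk v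
    rw [hmkout]
  let b : {v : V // ¬ P v} → incImage R :=
    fun i => ⟨omegaC i.1.1 - omegaC ((mk i.1).out).1, hmem i.1⟩
  have hli : LinearIndependent ℝ b := by
    refine LinearIndependent.of_comp (incImage R).subtype ?_
    rw [Fintype.linearIndependent_iff]
    intro g hg i
    have := congrFun hg i.1.1
    rw [Finset.sum_apply] at this
    have hterm : ∀ j : {v : V // ¬ P v},
        (g j • ((incImage R).subtype ∘ b) j) i.1.1 = if j = i then g i else 0 := by
      intro j
      have hroot : ((mk j.1).out).1 ≠ i.1.1 := by
        intro h
        have hout : (mk j.1).out = i.1 := Subtype.ext h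
        apply i.2
        show i.1 = (mk i.1).out
        rw [← hout, hmkout, hout]
      by_cases hji : j = i
      · subst hji
        simp [b, omegaC, hroot.symm]
      · have : i.1.1 ≠ j.1.1 := by
          intro h
          exact hji (Subtype.ext (Subtype.ext h.symm))
        simp [b, omegaC, this, hroot.symm, hji]
    rw [Finset.sum_congr rfl fun j _ => hterm j, Fintype.sum_ite_eq' i] at this
    simpa using this
  have hcard : Fintype.card {v : V // ¬ P v} ≤ Module.finrank ℝ (incImage R) :=
    hli.fintype_card_le_finrank
  have hcompl : Fintype.card {v : V // ¬ P v}
      = Fintype.card V - Fintype.card {v : V // P v} :=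
    Fintype.card_subtype_compl P
  have hle : Fintype.card {v : V // P v} ≤ Fintype.card V := Fintype.card_subtype_le _
  have hΓ : Nat.card Γ = Fintype.card Γ := Nat.card_eq_fintype_card
  have hVcard : Fintype.card V = Fintype.card {y : S → ℝ // y ∈ complexesOf R} :=
    Fintype.card_congr (Equiv.refl _)
  omega

lemma finrank_incImage_add_numLinkageClasses (R : Finset (Rxn S)) :
    Module.finrank ℝ (incImage R) + numLinkageClasses R = numComplexes R := by
  have h1 := finrank_incImage_add_le R
  have h2 := le_finrank_incImage R
  have h3 : numComplexes R = Fintype.card {y : S → ℝ // y ∈ complexesOf R} :=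
    (Fintype.card_coe _).symm
  unfold numLinkageClasses
  omega

lemma finrank_finset_sup_le {ι M : Type*} [AddCommGroup M] [Module ℝ M]
    (p : ι → Submodule ℝ M) [∀ i, FiniteDimensional ℝ (p i)] (s : Finset ι) :
    Module.finrank ℝ (s.sup p : Submodule ℝ M) ≤ ∑ i ∈ s, Module.finrank ℝ (p i) := by
  classical
  induction s using Finset.induction with
  | empty => simp
  | @insert a s ha ih =>
    rw [Finset.sup_insert, Finset.sum_insert ha]
    exact le_trans (Submodule.finrank_add_le_finrank_add_finrank _ _)
      (Nat.add_le_add_left ih _)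

lemma sum_finrank_le_finrank_finset_sup {ι M : Type*} [AddCommGroup M] [Module ℝ M]
    (p : ι → Submodule ℝ M) [∀ i, FiniteDimensional ℝ (p i)]
    (hind : iSupIndep p) (s : Finset ι) :
    ∑ i ∈ s, Module.finrank ℝ (p i) ≤ Module.finrank ℝ (s.sup p : Submodule ℝ M) := by
  classical
  induction s using Finset.induction with
  | empty => simp
  | @insert a s ha ih =>
    rw [Finset.sup_insert, Finset.sum_insert ha]
    have hdisj : Disjoint (p a) (s.sup p) := by
      refine (hind a).mono_right ?_
      refine Finset.sup_le fun i hi => ?_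
      exact le_iSup₂_of_le i (fun h => ha (h ▸ hi)) le_rfl
    have heq : Module.finrank ℝ (p a ⊔ s.sup p : Submodule ℝ M)
        = Module.finrank ℝ (p a) + Module.finrank ℝ ↥(s.sup p) := by
      have := Submodule.finrank_sup_add_finrank_inf_eq (p a) (s.sup p)
      rw [hdisj.eq_bot] at this
      simpa using this
    rw [heq]
    exact Nat.add_le_add_left ih _

lemma finset_univ_sup_eq_iSup {ι M : Type*} [Fintype ι] [AddCommGroup M] [Module ℝ M]
    (p : ι → Submodule ℝ M) : Finset.univ.sup p = ⨆ i, p i := by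
  apply le_antisymm
  · exact Finset.sup_le fun i _ => le_iSup p i
  · exact iSup_le fun i => Finset.le_sup (Finset.mem_univ i)

end AuxProof

/-- for an incidence independent decomposition, δ ≥ δ_1 + ... + δ_k. -/
theorem stmt_3 (C : Finset (S → ℝ)) (R : Finset (Rxn S)) {k : ℕ}
    (f : Fin k → Finset (Rxn S)) (hcrn : IsCRN C R)
    (hdec : IsDecomposition R f) (hinc : IsIncidenceIndependent R f) :
    ∑ i, deficiency (f i) ≤ deficiency R := by
  obtain ⟨hsup, hind⟩ := hinc
  obtain ⟨hne, hdisj, hsub, hcov⟩ := hdec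
  have e1 : ∀ Q : Finset (Rxn S),
      deficiency Q = (Module.finrank ℝ (incImage Q) : ℤ) - crnRank Q := by
    intro Q
    have := finrank_incImage_add_numLinkageClasses Q
    unfold deficiency
    omega
  have hinc_le : ∑ i, Module.finrank ℝ (incImage (f i))
      ≤ Module.finrank ℝ (incImage R) := by
    calc ∑ i, Module.finrank ℝ (incImage (f i))
        ≤ Module.finrank ℝ ↥(Finset.univ.sup fun i => incImage (f i)) :=
          sum_finrank_le_finrank_finset_sup _ hind _
      _ = Module.finrank ℝ (incImage R) := by
          rw [finset_univ_sup_eq_iSup, hsup]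
  have hst : crnRank R ≤ ∑ i, crnRank (f i) := by
    have hle : stoichSubspace R ≤ Finset.univ.sup fun i => stoichSubspace (f i) := by
      rw [stoichSubspace, Submodule.span_le]
      rintro x hx
      obtain ⟨r, hr, rfl⟩ := hx
      obtain ⟨i, hi⟩ := hcov r hr
      exact SetLike.le_def.mp
        (Finset.le_sup (f := fun i => stoichSubspace (f i)) (Finset.mem_univ i))
        (Submodule.subset_span ⟨r, hi, rfl⟩)
    exact le_trans (Submodule.finrank_mono hle) (finrank_finset_sup_le _ _)
  rw [e1]
  simp only [e1]
  rw [Finset.sum_sub_distrib, ← Nat.cast_sum, ← Nat.cast_sum]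
  exact sub_le_sub (Nat.cast_le.mpr hinc_le) (Nat.cast_le.mpr hst)

end
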